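/- Let \(G'\) be the disjoint union of a graph \(G\) with all complete bipartite graphs \(K_{\ell, m}\) where \(\ell + m = 2k\) and \(1 \leq \ell \leq k - 1\). Then \(G\) contains a complete bipartite subgraph with both parts of size at least \(k\) if and only if \(b(G') \geq 2k\), where \(b(H)\) is the largest \(n\) such that \(H\) contains a complete bipartite subgraph with parts of sizes \(\ell, m\) for every \(\ell, m \geq 1\) with \(\ell + m = n\). -/

import Mathlib

/-- `H` contains a (not necessarily induced) complete bipartite subgraph with
parts of sizes `l` and `m`. -/
def HasBiclique {α : Type} (H : SimpleGraph α) (l m : ℕ) : Prop :=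
  ∃ A B : Finset α, Disjoint A B ∧ A.card = l ∧ B.card = m ∧
    ∀ a ∈ A, ∀ b ∈ B, H.Adj a b

/-- The parameter `b(H)`: the largest `n` such that `H` contains a complete
bipartite subgraph `K_{l,m}` for every `l, m ≥ 1` with `l + m = n`. -/
noncomputable def bParam {α : Type} [Fintype α] (H : SimpleGraph α) : ℕ :=
  sSup {n : ℕ | ∀ l m : ℕ, 1 ≤ l → 1 ≤ m → l + m = n → HasBiclique H l m}

/-- The disjoint union `G'` of `G` with all complete bipartite graphs `K_{l,m}`
where `l + m = 2k` and `1 ≤ l ≤ k - 1`: the index `j : Fin (k-1)` encodes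
`l = j + 1`, and the `j`-th copy of `K_{l, 2k-l}` lives on `Fin (2k)` with parts
`{a : a ≤ j}` and its complement. -/
def auxGraph {V : Type} (G : SimpleGraph V) (k : ℕ) :
    SimpleGraph (V ⊕ (Fin (k - 1) × Fin (2 * k))) :=
  SimpleGraph.fromRel (fun x y =>
    match x, y with
    | Sum.inl u, Sum.inl v => G.Adj u v
    | Sum.inr (j, a), Sum.inr (j', b) =>
        j = j' ∧ ((a.val ≤ j.val) ↔ ¬(b.val ≤ j.val))
    | _, _ => False)

lemma hasBiclique_symm {α : Type} {H : SimpleGraph α} {l m : ℕ}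
    (h : HasBiclique H l m) : HasBiclique H m l := by
  obtain ⟨A, B, hd, hA, hB, hadj⟩ := h
  exact ⟨B, A, hd.symm, hB, hA, fun b hb a ha => (hadj a ha b hb).symm⟩

lemma hasBiclique_mono {α : Type} {H : SimpleGraph α} {l m l' m' : ℕ}
    (h : HasBiclique H l m) (hl : l' ≤ l) (hm : m' ≤ m) : HasBiclique H l' m' := by
  obtain ⟨A, B, hd, hA, hB, hadj⟩ := h
  obtain ⟨A', hA'sub, hA'⟩ := Finset.exists_subset_card_eq (s := A) (hA ▸ hl)
  obtain ⟨B', hB'sub, hB'⟩ := Finset.exists_subset_card_eq (s := B) (hB ▸ hm)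
  exact ⟨A', B', hd.mono hA'sub hB'sub, hA', hB',
    fun a ha b hb => hadj a (hA'sub ha) b (hB'sub hb)⟩

lemma auxGraph_adj {V : Type} (G : SimpleGraph V) (k : ℕ)
    (x y : V ⊕ (Fin (k - 1) × Fin (2 * k))) :
    (auxGraph G k).Adj x y ↔ x ≠ y ∧
      ((∃ u v, x = Sum.inl u ∧ y = Sum.inl v ∧ G.Adj u v) ∨
       (∃ j a b, x = Sum.inr (j, a) ∧ y = Sum.inr (j, b) ∧
          (a.val ≤ j.val ↔ ¬ b.val ≤ j.val))) := by
  rw [show (auxGraph G k).Adj x y ↔ _ from SimpleGraph.fromRel_adj _ x y]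
  constructor
  · rintro ⟨hne, h⟩
    refine ⟨hne, ?_⟩
    rcases x with u | ⟨j, a⟩ <;> rcases y with v | ⟨j', b⟩
    · rcases h with h | h
      · exact Or.inl ⟨u, v, rfl, rfl, h⟩
      · exact Or.inl ⟨u, v, rfl, rfl, h.symm⟩
    · exact absurd h (by simp)
    · exact absurd h (by simp)
    · rcases h with ⟨rfl, h⟩ | ⟨rfl, h⟩
      · exact Or.inr ⟨j, a, b, rfl, rfl, h⟩
      · exact Or.inr ⟨_, a, b, rfl, rfl, by tauto⟩
  · rintro ⟨hne, h⟩
    refine ⟨hne, Or.inl ?_⟩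
    rcases h with ⟨u, v, rfl, rfl, h⟩ | ⟨j, a, b, rfl, rfl, h⟩
    · exact h
    · exact ⟨rfl, h⟩

lemma bParam_bddAbove {α : Type} [Fintype α] (H : SimpleGraph α) :
    BddAbove {n : ℕ | ∀ l m : ℕ, 1 ≤ l → 1 ≤ m → l + m = n → HasBiclique H l m} := by
  classical
  refine ⟨Fintype.card α + 1, fun n hn => ?_⟩
  by_contra hlt
  push_neg at hlt
  obtain ⟨A, B, hd, hA, hB, -⟩ := hn 1 (n - 1) le_rfl (by omega) (by omega)
  have h1 := Finset.card_le_univ (A ∪ B)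
  rw [Finset.card_union_of_disjoint hd, hA, hB] at h1
  omega

/-- The copy `j = l - 1` gives `K_{l, 2k-l}` inside `auxGraph G k` when `l < k`. -/
lemma aux_hasBiclique_small {V : Type} (G : SimpleGraph V) {k l : ℕ}
    (hl : 1 ≤ l) (hlk : l < k) : HasBiclique (auxGraph G k) l (2 * k - l) := by
  classical
  set j : Fin (k - 1) := ⟨l - 1, by omega⟩ with hj
  let fA : Fin l ↪ (V ⊕ (Fin (k - 1) × Fin (2 * k))) :=
    ⟨fun i => Sum.inr (j, ⟨i.val, by have := i.isLt; omega⟩), by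
      intro i i' h
      simp only [Sum.inr.injEq, Prod.mk.injEq, Fin.mk.injEq, true_and] at h
      exact Fin.ext h⟩
  let fB : Fin (2 * k - l) ↪ (V ⊕ (Fin (k - 1) × Fin (2 * k))) :=
    ⟨fun i => Sum.inr (j, ⟨i.val + l, by have := i.isLt; omega⟩), by
      intro i i' h
      simp only [Sum.inr.injEq, Prod.mk.injEq, Fin.mk.injEq, true_and] at h
      exact Fin.ext (by omega)⟩
  refine ⟨Finset.univ.map fA, Finset.univ.map fB, ?_, by simp, by simp, ?_⟩
  · rw [Finset.disjoint_left]
    rintro x hx hy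
    simp only [Finset.mem_map, Finset.mem_univ, true_and] at hx hy
    obtain ⟨i, rfl⟩ := hx
    obtain ⟨i', hi'⟩ := hy
    change (Sum.inr (j, _) : V ⊕ _) = Sum.inr (j, _) at hi'
    simp only [fA, fB, Function.Embedding.coeFn_mk, Sum.inr.injEq, Prod.mk.injEq,
      Fin.mk.injEq, true_and] at hi'
    have := i.isLt
    omega
  · intro a ha b hb
    simp only [Finset.mem_map, Finset.mem_univ, true_and] at ha hb
    obtain ⟨i, rfl⟩ := ha
    obtain ⟨i', rfl⟩ := hb
    rw [auxGraph_adj]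
    constructor
    · change (Sum.inr (j, _) : V ⊕ _) ≠ Sum.inr (j, _)
      simp only [fA, fB, Function.Embedding.coeFn_mk, ne_eq, Sum.inr.injEq, Prod.mk.injEq,
        Fin.mk.injEq, true_and, not_and]
      intro _
      omega
    · refine Or.inr ⟨j, _, _, rfl, rfl, ?_⟩
      simp only [hj]
      have := i.isLt
      omega

/-- Embed a biclique of `G` into `auxGraph G k` via `Sum.inl`. -/
lemma aux_hasBiclique_inl {V : Type} (G : SimpleGraph V) (k : ℕ) {l m : ℕ}
    (h : HasBiclique G l m) : HasBiclique (auxGraph G k) l m := by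
  obtain ⟨A, B, hd, hA, hB, hadj⟩ := h
  refine ⟨A.map (Function.Embedding.inl), B.map (Function.Embedding.inl),
    by rwa [Finset.disjoint_map], by simpa, by simpa, ?_⟩
  intro a ha b hb
  simp only [Finset.mem_map, Function.Embedding.inl_apply] at ha hb
  obtain ⟨u, hu, rfl⟩ := ha
  obtain ⟨v, hv, rfl⟩ := hb
  have hGuv := hadj u hu v hv
  rw [auxGraph_adj]
  exact ⟨by simp [hGuv.ne], Or.inl ⟨u, v, rfl, rfl, hGuv⟩⟩

lemma card_le_aux {V : Type} {k : ℕ} (j₀ : Fin (k - 1))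
    (C : Finset (V ⊕ (Fin (k - 1) × Fin (2 * k))))
    (h : ∀ x ∈ C, ∃ s : Fin (2 * k), x = Sum.inr (j₀, s) ∧ s.val ≤ j₀.val) :
    C.card ≤ j₀.val + 1 := by
  classical
  have hcard : C.card = (C.image (Sum.elim (fun _ => 0) (fun p => p.2.val))).card := by
    rw [Finset.card_image_of_injOn]
    intro x hx y hy hxy
    obtain ⟨s, rfl, -⟩ := h x hx
    obtain ⟨t, rfl, -⟩ := h y hy
    simp only [Sum.elim_inr] at hxy
    rw [Fin.ext hxy]
  rw [hcard]
  calc (C.image (Sum.elim (fun _ => 0) (fun p => p.2.val))).card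
      ≤ (Finset.range (j₀.val + 1)).card := by
        apply Finset.card_le_card
        intro n hn
        simp only [Finset.mem_image] at hn
        obtain ⟨x, hx, rfl⟩ := hn
        obtain ⟨s, rfl, hs⟩ := h x hx
        simp only [Sum.elim_inr, Finset.mem_range]
        omega
    _ = j₀.val + 1 := Finset.card_range _

/-- `G` contains a complete bipartite subgraph with both parts of size at least
`k` if and only if `b(G') ≥ 2k`, where `G'` is the disjoint union of `G` with all
complete bipartite graphs `K_{l,m}` for `l + m = 2k`, `1 ≤ l ≤ k - 1`. -/
theorem balanced_biclique_iff_bParam {V : Type} [Fintype V] [DecidableEq V]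
    (G : SimpleGraph V) (k : ℕ) (hk : 1 ≤ k) :
    (∃ A B : Finset V, Disjoint A B ∧ k ≤ A.card ∧ k ≤ B.card ∧
        ∀ a ∈ A, ∀ b ∈ B, G.Adj a b) ↔
      2 * k ≤ bParam (auxGraph G k) := by
  classical
  have hbdd := bParam_bddAbove (auxGraph G k)
  have h0 : (0 : ℕ) ∈ {n : ℕ | ∀ l m : ℕ, 1 ≤ l → 1 ≤ m → l + m = n →
      HasBiclique (auxGraph G k) l m} := fun l m hl hm h => absurd h (by omega)
  constructor
  · rintro ⟨A, B, hd, hA, hB, hadj⟩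
    have hGkk : HasBiclique G k k :=
      hasBiclique_mono ⟨A, B, hd, rfl, rfl, hadj⟩ hA hB
    have hmem : 2 * k ∈ {n : ℕ | ∀ l m : ℕ, 1 ≤ l → 1 ≤ m → l + m = n →
        HasBiclique (auxGraph G k) l m} := by
      intro l m hl hm hlm
      rcases lt_trichotomy l k with hlt | heq | hgt
      · have := aux_hasBiclique_small G hl hlt
        have hm' : m = 2 * k - l := by omega
        rwa [hm']
      · have hm' : m = k := by omega
        rw [heq, hm']
        exact aux_hasBiclique_inl G k hGkk
      · have hmk : m < k := by omega
        have := aux_hasBiclique_small G hm hmk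
        have hl' : l = 2 * k - m := by omega
        rw [hl']
        exact hasBiclique_symm this
    exact le_csSup hbdd hmem
  · intro hle
    have hmem : 2 * k ∈ {n : ℕ | ∀ l m : ℕ, 1 ≤ l → 1 ≤ m → l + m = n →
        HasBiclique (auxGraph G k) l m} := by
      have hSup := Nat.sSup_mem ⟨0, h0⟩ hbdd
      have hge : 2 * k ≤ sSup {n : ℕ | ∀ l m : ℕ, 1 ≤ l → 1 ≤ m → l + m = n →
          HasBiclique (auxGraph G k) l m} := hle
      intro l m hl hm hlm
      have h2 := hSup l (m + (sSup {n : ℕ | ∀ l m : ℕ, 1 ≤ l → 1 ≤ m → l + m = n →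
          HasBiclique (auxGraph G k) l m} - 2 * k)) hl (by omega) (by omega)
      exact hasBiclique_mono h2 le_rfl (by omega)
    obtain ⟨A, B, hd, hA, hB, hadj⟩ := hmem k k hk hk (by ring)
    obtain ⟨a₀, ha₀⟩ := Finset.card_pos.mp (by omega : 0 < A.card)
    obtain ⟨b₀, hb₀⟩ := Finset.card_pos.mp (by omega : 0 < B.card)
    rcases a₀ with u₀ | ⟨j₀, s₀⟩
    · -- everything lives in the `G` component
      have hBinl : ∀ b ∈ B, ∃ v, b = Sum.inl v := by
        intro b hb
        have h := ((auxGraph_adj G k _ _).mp (hadj _ ha₀ b hb)).2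
        rcases h with ⟨u, v, -, rfl, -⟩ | ⟨j, a, c, h1, -, -⟩
        · exact ⟨v, rfl⟩
        · exact absurd h1 (by simp)
      obtain ⟨v₀, rfl⟩ := hBinl b₀ hb₀
      have hAinl : ∀ a ∈ A, ∃ u, a = Sum.inl u := by
        intro a ha
        have h := ((auxGraph_adj G k _ _).mp (hadj a ha _ hb₀)).2
        rcases h with ⟨u, v, rfl, -, -⟩ | ⟨j, a', c, -, h2, -⟩
        · exact ⟨u, rfl⟩
        · exact absurd h2 (by simp)
      set g : V ⊕ (Fin (k - 1) × Fin (2 * k)) → V := Sum.elim id (fun _ => u₀) with hg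
      have hAmem : ∀ u, u ∈ A.image g → Sum.inl u ∈ A := by
        intro u hu
        simp only [Finset.mem_image] at hu
        obtain ⟨x, hx, rfl⟩ := hu
        obtain ⟨u', rfl⟩ := hAinl x hx
        simpa [hg] using hx
      have hBmem : ∀ v, v ∈ B.image g → Sum.inl v ∈ B := by
        intro v hv
        simp only [Finset.mem_image] at hv
        obtain ⟨x, hx, rfl⟩ := hv
        obtain ⟨v', rfl⟩ := hBinl x hx
        simpa [hg] using hx
      refine ⟨A.image g, B.image g, ?_, ?_, ?_, ?_⟩
      · rw [Finset.disjoint_left]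
        intro u huA huB
        exact Finset.disjoint_left.mp hd (hAmem u huA) (hBmem u huB)
      · have : (A.image g).card = A.card := by
          apply Finset.card_image_of_injOn
          intro x hx y hy hxy
          obtain ⟨u, rfl⟩ := hAinl x hx
          obtain ⟨v, rfl⟩ := hAinl y hy
          simp only [hg, Sum.elim_inl, id_eq] at hxy
          rw [hxy]
        omega
      · have : (B.image g).card = B.card := by
          apply Finset.card_image_of_injOn
          intro x hx y hy hxy
          obtain ⟨u, rfl⟩ := hBinl x hx
          obtain ⟨v, rfl⟩ := hBinl y hy
          simp only [hg, Sum.elim_inl, id_eq] at hxy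
          rw [hxy]
        omega
      · intro u hu v hv
        have h := ((auxGraph_adj G k _ _).mp (hadj _ (hAmem u hu) _ (hBmem v hv))).2
        rcases h with ⟨u', v', hu', hv', hG⟩ | ⟨j, a, c, h1, -, -⟩
        · rw [Sum.inl.injEq] at hu' hv'
          rwa [hu', hv']
        · exact absurd h1 (by simp)
    · -- lives in a bipartite component: contradiction
      exfalso
      have hj := j₀.isLt
      by_cases hs : s₀.val ≤ j₀.val
      · -- all of B has snd > j₀, hence all of A has snd ≤ j₀, so |A| ≤ j₀+1 < k
        have hBform : ∀ b ∈ B, ∃ t : Fin (2 * k),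
            b = Sum.inr (j₀, t) ∧ ¬ t.val ≤ j₀.val := by
          intro b hb
          have h := ((auxGraph_adj G k _ _).mp (hadj _ ha₀ b hb)).2
          rcases h with ⟨u, v, h1, -, -⟩ | ⟨j, a, c, h1, h2, h3⟩
          · exact absurd h1 (by simp)
          · rw [Sum.inr.injEq, Prod.mk.injEq] at h1
            obtain ⟨rfl, rfl⟩ := h1
            exact ⟨c, h2, h3.mp hs⟩
        obtain ⟨t₀, hb₀eq, ht₀⟩ := hBform b₀ hb₀
        have hAform : ∀ a ∈ A, ∃ s : Fin (2 * k),
            a = Sum.inr (j₀, s) ∧ s.val ≤ j₀.val := by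
          intro a ha
          have h := ((auxGraph_adj G k _ _).mp (hadj a ha _ hb₀)).2
          rw [hb₀eq] at h
          rcases h with ⟨u, v, -, h1, -⟩ | ⟨j, a', c, h1, h2, h3⟩
          · exact absurd h1 (by simp)
          · rw [Sum.inr.injEq, Prod.mk.injEq] at h2
            obtain ⟨rfl, rfl⟩ := h2
            exact ⟨a', h1, h3.mpr ht₀⟩
        have := card_le_aux j₀ A hAform
        omega
      · -- all of B has snd ≤ j₀, so |B| ≤ j₀+1 < k
        have hBform : ∀ b ∈ B, ∃ t : Fin (2 * k),
            b = Sum.inr (j₀, t) ∧ t.val ≤ j₀.val := by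
          intro b hb
          have h := ((auxGraph_adj G k _ _).mp (hadj _ ha₀ b hb)).2
          rcases h with ⟨u, v, h1, -, -⟩ | ⟨j, a, c, h1, h2, h3⟩
          · exact absurd h1 (by simp)
          · rw [Sum.inr.injEq, Prod.mk.injEq] at h1
            obtain ⟨rfl, rfl⟩ := h1
            refine ⟨c, h2, ?_⟩
            by_contra hnot
            exact hs (h3.mpr hnot)
        have := card_le_aux j₀ B hBform
        omega
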